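/- arXiv:1304.7895 — 3 statements merged into one kernel-verified Lean document; each statement's English description precedes it below -/
import Mathlib

section
/- (Generalized Bombieri–Lagarias theorem, direction (a)⇒(b), case a < σ.) Let a and σ be real numbers with a < σ. Let ι be a countable index type and ρ : ι → ℂ a family of complex numbers such that ρ(i) ≠ 2σ − a for every i, the family i ↦ (1 + |Re ρ(i)|)/(1 + |ρ(i) + a − 2σ|²) is summable, and Re ρ(i) ≤ σ for every i. Then for every positive integer n the family i ↦ Re(1 − ((ρ(i) − a)/(ρ(i) + a − 2σ))^n) is summable and Σ_i Re(1 − ((ρ(i) − a)/(ρ(i) + a − 2σ))^n) ≥ 0. -/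
open Complex

lemma abs_one_sub_pow_le (w : ℂ) (hw : ‖w‖ ≤ 1) (n : ℕ) :
    ‖1 - w ^ n‖ ≤ n * ‖1 - w‖ := by
  induction n with
  | zero => simp
  | succ n ih =>
    have h : 1 - w ^ (n + 1) = (1 - w ^ n) + w ^ n * (1 - w) := by ring
    rw [h]
    calc ‖(1 - w ^ n) + w ^ n * (1 - w)‖
        ≤ ‖1 - w ^ n‖ + ‖w ^ n * (1 - w)‖ := norm_add_le _ _
      _ ≤ n * ‖1 - w‖ + 1 * ‖1 - w‖ := by
          rw [norm_mul, norm_pow]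
          gcongr
          exact pow_le_one₀ (norm_nonneg w) hw
      _ = (n + 1 : ℕ) * ‖1 - w‖ := by push_cast; ring

lemma re_one_sub_pow_le (w : ℂ) (hw : ‖w‖ ≤ 1) (n : ℕ) :
    (1 - w ^ n).re ≤ (n : ℝ) ^ 2 * (1 - w).re := by
  have h1 : Complex.normSq w ≤ 1 := by
    rw [← Complex.sq_norm]; nlinarith [norm_nonneg w]
  have hsq : ‖1 - w‖ ^ 2 ≤ 2 * (1 - w).re := by
    rw [Complex.sq_norm, Complex.normSq_apply] at *
    simp only [Complex.sub_re, Complex.sub_im, Complex.one_re, Complex.one_im]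
    nlinarith
  induction n with
  | zero => simp
  | succ n ih =>
    have key : (w ^ n * (1 - w)).re ≤ (2 * n + 1) * (1 - w).re := by
      have h3 : -(((1 - w ^ n) * (1 - w)).re) ≤ 2 * n * (1 - w).re := by
        have a1 := Complex.abs_re_le_norm ((1 - w ^ n) * (1 - w))
        have a2 : ‖(1 - w ^ n) * (1 - w)‖
            ≤ n * ‖1 - w‖ ^ 2 := by
          rw [norm_mul]
          calc ‖1 - w ^ n‖ * ‖1 - w‖
              ≤ (n * ‖1 - w‖) * ‖1 - w‖ := by
                gcongr; exact abs_one_sub_pow_le w hw n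
            _ = n * ‖1 - w‖ ^ 2 := by ring
        have a3 : (n : ℝ) * ‖1 - w‖ ^ 2 ≤ 2 * n * (1 - w).re := by
          nlinarith [Nat.cast_nonneg (α := ℝ) n, norm_nonneg (1 - w)]
        have hb : |((1 - w ^ n) * (1 - w)).re| ≤ 2 * n * (1 - w).re :=
          a1.trans (a2.trans a3)
        linarith [(abs_le.mp hb).1]
      have h2 : (w ^ n * (1 - w)).re = (1 - w).re - ((1 - w ^ n) * (1 - w)).re := by
        rw [show w ^ n * (1 - w) = (1 - w) - (1 - w ^ n) * (1 - w) by ring, Complex.sub_re]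
      linarith
    have h4 : (1 - w ^ (n + 1)).re = (1 - w ^ n).re + (w ^ n * (1 - w)).re := by
      rw [show (1 : ℂ) - w ^ (n + 1) = (1 - w ^ n) + w ^ n * (1 - w) by ring, Complex.add_re]
    push_cast
    push_cast at ih
    nlinarith [ih, key]

lemma real_bound (c b x N : ℝ) (hc : 0 < c) (hmc : c ≤ b - x) (hN : c ^ 2 ≤ N) :
    2 * c * (b - x) * (1 + N) ≤ ((2 * c + 2 / c) * (1 + |b|)) * ((1 + |x|) * N) := by
  set P := (1 + |b|) * (1 + |x|) with hP
  have hP1 : 1 ≤ P := by nlinarith [abs_nonneg b, abs_nonneg x]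
  have hmP : b - x ≤ P := by
    nlinarith [le_abs_self b, neg_abs_le x, abs_nonneg b, abs_nonneg x]
  have hNpos : 0 < N := lt_of_lt_of_le (by positivity) hN
  have e2 : 2 * c * (b - x) ≤ (2 / c) * P * N := by
    have h0 : 0 ≤ (2 / c) * P := by positivity
    have h1 : (2 / c) * P * c ^ 2 ≤ (2 / c) * P * N := by nlinarith
    have h2 : (2 / c) * P * c ^ 2 = 2 * c * P := by field_simp
    nlinarith
  have e3 : 2 * c * (b - x) * N ≤ 2 * c * P * N := by
    nlinarith [mul_le_mul_of_nonneg_right hmP hNpos.le]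
  have goal2 : ((2 * c + 2 / c) * (1 + |b|)) * ((1 + |x|) * N)
      = 2 * c * P * N + (2 / c) * P * N := by rw [hP]; ring
  nlinarith

/-- Generalized Bombieri–Lagarias theorem, (a)⇒(b), case `a < σ`. -/
theorem bombieri_lagarias_forward (a σ : ℝ) (h : a < σ) (ι : Type*) [Countable ι]
    (ρ : ι → ℂ) (hne : ∀ i, ρ i ≠ 2 * σ - a)
    (hsum : Summable fun i => (1 + |(ρ i).re|) / (1 + ‖ρ i + a - 2 * σ‖ ^ 2))
    (hre : ∀ i, (ρ i).re ≤ σ) (n : ℕ) (hn : 0 < n) :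
    Summable (fun i => (1 - ((ρ i - a) / (ρ i + a - 2 * σ)) ^ n).re) ∧
    0 ≤ ∑' i, (1 - ((ρ i - a) / (ρ i + a - 2 * σ)) ^ n).re := by
  set c : ℝ := σ - a with hcdef
  have hc : 0 < c := by simp [hcdef]; linarith
  have hd : ∀ i, ρ i + a - 2 * σ ≠ 0 := by
    intro i h0
    exact hne i (by linear_combination h0)
  have hdre : ∀ i, (ρ i + a - 2 * σ : ℂ).re = (ρ i).re + a - 2 * σ := by
    intro i; simp
  have hdim : ∀ i, (ρ i + a - 2 * σ : ℂ).im = (ρ i).im := by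
    intro i; simp
  have hNlb : ∀ i, c ^ 2 ≤ Complex.normSq (ρ i + a - 2 * σ) := by
    intro i
    rw [Complex.normSq_apply, hdre, hdim]
    nlinarith [hre i, sq_nonneg ((ρ i).im)]
  have hw : ∀ i, ‖(ρ i - a) / (ρ i + a - 2 * σ)‖ ≤ 1 := by
    intro i
    rw [norm_div, div_le_one (norm_pos_iff.mpr (hd i))]
    rw [Complex.norm_def, Complex.norm_def]
    apply Real.sqrt_le_sqrt
    rw [Complex.normSq_apply, Complex.normSq_apply]
    simp only [Complex.sub_re, Complex.sub_im, Complex.add_re, Complex.add_im,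
      Complex.ofReal_re, Complex.ofReal_im, Complex.mul_re, Complex.mul_im,
      Complex.re_ofNat, Complex.im_ofNat]
    nlinarith [hre i, mul_nonneg (sub_nonneg.mpr (hre i)) (le_of_lt (sub_pos.mpr h))]
  have h1w : ∀ i, ((1:ℂ) - (ρ i - a) / (ρ i + a - 2 * σ)).re
      = (2 * c * ((2 * σ - a) - (ρ i).re)) / Complex.normSq (ρ i + a - 2 * σ) := by
    intro i
    have heq : (1:ℂ) - (ρ i - a) / (ρ i + a - 2 * σ)
        = ((2 * a - 2 * σ : ℝ) : ℂ) / (ρ i + a - 2 * σ) := by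
      have hd' := hd i
      field_simp
      push_cast
      ring
    rw [heq, Complex.div_re, Complex.ofReal_re, Complex.ofReal_im, hdre, hdim]
    rw [hcdef]
    ring
  -- nonnegativity of each term
  have hnonneg : ∀ i, 0 ≤ (1 - ((ρ i - a) / (ρ i + a - 2 * σ)) ^ n).re := by
    intro i
    have h1 : (((ρ i - a) / (ρ i + a - 2 * σ)) ^ n).re ≤ 1 := by
      calc (((ρ i - a) / (ρ i + a - 2 * σ)) ^ n).re
          ≤ ‖((ρ i - a) / (ρ i + a - 2 * σ)) ^ n‖ := Complex.re_le_norm _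
        _ ≤ 1 := by rw [norm_pow]; exact pow_le_one₀ (norm_nonneg _) (hw i)
    simp only [Complex.sub_re, Complex.one_re]
    linarith
  -- the comparison bound
  set K : ℝ := (2 * c + 2 / c) * (1 + |2 * σ - a|) with hK
  have hbound : ∀ i, (1 - ((ρ i - a) / (ρ i + a - 2 * σ)) ^ n).re
      ≤ ((n : ℝ) ^ 2 * K) * ((1 + |(ρ i).re|) / (1 + ‖ρ i + a - 2 * σ‖ ^ 2)) := by
    intro i
    have step1 := re_one_sub_pow_le _ (hw i) n
    have hNpos : 0 < Complex.normSq (ρ i + a - 2 * σ) :=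
      lt_of_lt_of_le (by positivity) (hNlb i)
    have step2 : ((1:ℂ) - (ρ i - a) / (ρ i + a - 2 * σ)).re
        ≤ K * ((1 + |(ρ i).re|) / (1 + ‖ρ i + a - 2 * σ‖ ^ 2)) := by
      rw [h1w i, Complex.sq_norm, hK, ← mul_div_assoc]
      rw [div_le_div_iff₀ hNpos (by linarith [Complex.normSq_nonneg (ρ i + a - 2 * σ)])]
      have := real_bound c (2 * σ - a) ((ρ i).re)
        (Complex.normSq (ρ i + a - 2 * σ)) hc (by rw [hcdef]; linarith [hre i]) (hNlb i)
      nlinarith [this]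
    calc (1 - ((ρ i - a) / (ρ i + a - 2 * σ)) ^ n).re
        ≤ (n : ℝ) ^ 2 * ((1:ℂ) - (ρ i - a) / (ρ i + a - 2 * σ)).re := step1
      _ ≤ (n : ℝ) ^ 2 * (K * ((1 + |(ρ i).re|) / (1 + ‖ρ i + a - 2 * σ‖ ^ 2))) := by
          apply mul_le_mul_of_nonneg_left step2 (by positivity)
      _ = ((n : ℝ) ^ 2 * K) * ((1 + |(ρ i).re|) / (1 + ‖ρ i + a - 2 * σ‖ ^ 2)) := by
          ring
  have hsummable : Summable (fun i => (1 - ((ρ i - a) / (ρ i + a - 2 * σ)) ^ n).re) :=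
    Summable.of_nonneg_of_le hnonneg hbound (hsum.mul_left _)
  exact ⟨hsummable, tsum_nonneg hnonneg⟩
end

section
/- (Generalized Li criterion for multisets, Theorem 3.) Let σ be a real number, ι a countable index type, and ρ : ι → ℂ a family of complex numbers such that: for every real a ≠ σ one has ρ(i) ≠ 2σ − a and ρ(i) ≠ a for all i; the families i ↦ (1 + |Re ρ(i)|)/(1 + |ρ(i) + a − 2σ|²) and i ↦ (1 + |Re ρ(i)|)/(1 + |ρ(i) − a|²) are summable for every real a; and the family is closed under the symmetry ρ ↦ 2σ − ρ with multiplicity, i.e. there is a bijection τ : ι → ι with ρ(τ(i)) = 2σ − ρ(i) for all i. Then the following are equivalent: (a) Re ρ(i) = σ for every i; (b) for every real a ≠ σ and every positive integer n the family i ↦ Re(1 − ((ρ(i) − a)/(ρ(i) + a − 2σ))^n) is summable with Σ_i Re(1 − ((ρ(i) − a)/(ρ(i) + a − 2σ))^n) ≥ 0. -/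
open Complex

open Complex

private lemma re_identity (ξ : ℂ) :
    2 * (1 - ξ).re = (1 - ‖ξ‖ ^ 2) + ‖1 - ξ‖ ^ 2 := by
  rw [Complex.sq_norm, Complex.sq_norm]
  simp only [Complex.normSq_apply, Complex.sub_re, Complex.sub_im, Complex.one_re,
    Complex.one_im]
  ring

private lemma geom_identity (ζ : ℂ) (n : ℕ) :
    1 - ζ ^ n = (1 - ζ) * ∑ k ∈ Finset.range n, ζ ^ k := by
  have h := geom_sum_mul ζ n
  linear_combination h

private lemma abs_one_sub_pow_le_s11 {ζ : ℂ} {t : ℝ} (ht : 1 ≤ t) (hζ : ‖ζ‖ ≤ t)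
    (n : ℕ) : ‖1 - ζ ^ n‖ ≤ n * t ^ n * ‖1 - ζ‖ := by
  rw [geom_identity, norm_mul]
  have h2 : ‖∑ k ∈ Finset.range n, ζ ^ k‖ ≤ n * t ^ n := by
    calc ‖∑ k ∈ Finset.range n, ζ ^ k‖
        ≤ ∑ k ∈ Finset.range n, ‖ζ ^ k‖ := by
          exact norm_sum_le _ _
      _ ≤ ∑ k ∈ Finset.range n, t ^ n := by
          apply Finset.sum_le_sum
          intro k hk
          rw [norm_pow]
          calc ‖ζ‖ ^ k ≤ t ^ k := by
                exact pow_le_pow_left₀ (norm_nonneg _) hζ k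
            _ ≤ t ^ n := pow_le_pow_right₀ ht (Finset.mem_range.mp hk).le
      _ = n * t ^ n := by rw [Finset.sum_const, Finset.card_range, nsmul_eq_mul]
  calc ‖1 - ζ‖ * ‖∑ k ∈ Finset.range n, ζ ^ k‖
      ≤ ‖1 - ζ‖ * (n * t ^ n) :=
        mul_le_mul_of_nonneg_left h2 (norm_nonneg _)
    _ = n * t ^ n * ‖1 - ζ‖ := by ring

private lemma one_sub_pow_le_nat {x : ℝ} (h0 : 0 ≤ x) (h1 : x ≤ 1) (n : ℕ) :
    1 - x ^ n ≤ n * (1 - x) := by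
  have h := one_add_mul_le_pow (a := x - 1) (by linarith) n
  have : 1 + (n : ℝ) * (x - 1) ≤ x ^ n := by simpa using h
  nlinarith

private lemma re_nonneg_of_abs_le_one {ζ : ℂ} (hζ : ‖ζ‖ ≤ 1) (n : ℕ) :
    0 ≤ (1 - ζ ^ n).re := by
  have h1 : (ζ ^ n).re ≤ 1 := by
    calc (ζ ^ n).re ≤ ‖ζ ^ n‖ := Complex.re_le_norm _
      _ = ‖ζ‖ ^ n := norm_pow _ _
      _ ≤ 1 := pow_le_one₀ (norm_nonneg _) hζ
  simp [Complex.sub_re]; linarith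

private lemma re_pow_le_of_abs_le_one {ζ : ℂ} (hζ : ‖ζ‖ ≤ 1) (n : ℕ) :
    (1 - ζ ^ n).re ≤ n ^ 2 * (1 - ζ).re := by
  have hid1 := re_identity (ζ ^ n)
  have hid2 := re_identity ζ
  have habs : ‖ζ ^ n‖ = ‖ζ‖ ^ n := norm_pow _ _
  have h1 : 1 - ‖ζ ^ n‖ ^ 2 ≤ (n : ℝ) * (1 - ‖ζ‖ ^ 2) := by
    rw [habs, ← pow_mul, mul_comm n 2, pow_mul]
    exact one_sub_pow_le_nat (by positivity) (by nlinarith [norm_nonneg ζ]) n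
  have h2 : ‖1 - ζ ^ n‖ ^ 2 ≤ (n : ℝ) ^ 2 * ‖1 - ζ‖ ^ 2 := by
    have h := abs_one_sub_pow_le_s11 le_rfl (by simpa using hζ) n
    simp only [one_pow, mul_one] at h
    calc ‖1 - ζ ^ n‖ ^ 2 ≤ ((n : ℝ) * ‖1 - ζ‖) ^ 2 :=
          pow_le_pow_left₀ (norm_nonneg _) h 2
      _ = (n : ℝ) ^ 2 * ‖1 - ζ‖ ^ 2 := by ring
  have h3 : 0 ≤ 1 - ‖ζ‖ ^ 2 := by nlinarith [norm_nonneg ζ]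
  have h4 : (n : ℝ) ≤ (n : ℝ) ^ 2 := by
    rcases Nat.eq_zero_or_pos n with hn | hn
    · simp [hn]
    · have h1n : (1:ℝ) ≤ n := by exact_mod_cast hn
      nlinarith
  have h5 : (0:ℝ) ≤ ((n:ℝ)^2 - n) * (1 - ‖ζ‖ ^ 2) :=
    mul_nonneg (by linarith) h3
  nlinarith [sq_nonneg (‖1 - ζ‖)]

private lemma re_pow_le_of_abs_le_t {ζ : ℂ} {t : ℝ} (ht : 1 ≤ t)
    (h1 : 1 ≤ ‖ζ‖) (h2 : ‖ζ‖ ≤ t) (n : ℕ) :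
    (1 - ζ ^ n).re ≤ (n : ℝ) ^ 2 * t ^ (2 * n) * (‖1 - ζ‖ ^ 2 / 2) := by
  have hid1 := re_identity (ζ ^ n)
  have habs : ‖ζ ^ n‖ = ‖ζ‖ ^ n := norm_pow _ _
  have hA : 1 - ‖ζ ^ n‖ ^ 2 ≤ 0 := by
    rw [habs]
    have : (1:ℝ) ≤ (‖ζ‖ ^ n) ^ 2 := one_le_pow₀ (one_le_pow₀ h1)
    linarith
  have hB : ‖1 - ζ ^ n‖ ^ 2 ≤ (n : ℝ) ^ 2 * t ^ (2*n) * ‖1 - ζ‖ ^ 2 := by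
    have h := abs_one_sub_pow_le_s11 ht h2 n
    have := norm_nonneg (1 - ζ ^ n)
    have := norm_nonneg (1 - ζ)
    have hpow : t ^ (2*n) = t^n * t^n := by rw [two_mul, pow_add]
    calc ‖1 - ζ ^ n‖ ^ 2 ≤ ((n : ℝ) * t ^ n * ‖1 - ζ‖) ^ 2 :=
          pow_le_pow_left₀ (norm_nonneg _) h 2
      _ = (n : ℝ) ^ 2 * t ^ (2*n) * ‖1 - ζ‖ ^ 2 := by rw [hpow]; ring
  linarith

private lemma re_pow_eq (z : ℂ) (n : ℕ) :
    (z ^ n).re = ‖z‖ ^ n * Real.cos (n * Complex.arg z) := by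
  conv_lhs => rw [← Complex.norm_mul_exp_arg_mul_I z]
  rw [mul_pow, ← Complex.exp_nat_mul]
  have h : (n : ℂ) * (Complex.arg z * Complex.I) = ((n * Complex.arg z : ℝ) : ℂ) * Complex.I := by
    push_cast; ring
  rw [h, ← Complex.ofReal_pow]
  rw [Complex.re_ofReal_mul, Complex.exp_ofReal_mul_I_re]

private lemma finite_of_summable {ι : Type*} {f : ι → ℝ} (hf : Summable f) {ε : ℝ}
    (hε : 0 < ε) : {i | ε ≤ f i}.Finite := by
  have h2 : ∀ᶠ i in Filter.cofinite, f i < ε :=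
    hf.tendsto_cofinite_zero.eventually (gt_mem_nhds hε)
  rw [Filter.eventually_cofinite] at h2
  exact h2.subset (fun i hi => by simp only [Set.mem_setOf_eq] at hi ⊢; linarith)

private lemma re_real_div (c : ℝ) (u : ℂ) :
    ((c : ℂ) / u).re = c * u.re / Complex.normSq u := by
  rw [Complex.div_re]
  simp

private lemma simul_approx {ι : Type*} (s : Finset ι) (θ : ι → ℝ) (L : ℕ) :
    ∃ n : ℕ, L ≤ n ∧ 0 < n ∧ ∀ i ∈ s, 1 / 2 ≤ Real.cos (n * θ i) := by
  have hπ := Real.pi_pos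
  set α : ι → ℝ := fun i => θ i / (2 * Real.pi) with hα
  have hfracpos : ∀ (x : ℝ), 0 ≤ Int.fract x * 8 := fun x =>
    mul_nonneg (Int.fract_nonneg x) (by norm_num)
  have hfraclt : ∀ (x : ℝ), Int.fract x * 8 < 8 := fun x => by
    nlinarith [Int.fract_lt_one x]
  set F : ℕ → (s → Fin 8) := fun k i =>
    ⟨⌊Int.fract (((k * (L + 1) : ℕ) : ℝ) * α i.1) * 8⌋₊, by
      rw [Nat.floor_lt (hfracpos _)]
      exact_mod_cast hfraclt _⟩ with hF
  obtain ⟨k₁, k₂, hk_ne, hk_eq⟩ := Finite.exists_ne_map_eq_of_infinite F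
  obtain ⟨m₁, m₂, hmlt, hmeq⟩ : ∃ m₁ m₂ : ℕ, m₁ < m₂ ∧ F m₁ = F m₂ := by
    rcases hk_ne.lt_or_gt with h | h
    · exact ⟨k₁, k₂, h, hk_eq⟩
    · exact ⟨k₂, k₁, h, hk_eq.symm⟩
  refine ⟨(m₂ - m₁) * (L + 1), ?_, ?_, ?_⟩
  · have h1 : 1 ≤ m₂ - m₁ := by omega
    calc L ≤ L + 1 := by omega
      _ = 1 * (L + 1) := (one_mul _).symm
      _ ≤ (m₂ - m₁) * (L + 1) := Nat.mul_le_mul_right _ h1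
  · have h1 : 1 ≤ m₂ - m₁ := by omega
    positivity
  · intro i hi
    set x₁ : ℝ := ((m₁ * (L + 1) : ℕ) : ℝ) * α i with hx₁
    set x₂ : ℝ := ((m₂ * (L + 1) : ℕ) : ℝ) * α i with hx₂
    have hfloor_eq : ⌊Int.fract x₁ * 8⌋₊ = ⌊Int.fract x₂ * 8⌋₊ := by
      exact congrArg Fin.val (congrFun hmeq ⟨i, hi⟩)
    have hclose : |Int.fract x₂ - Int.fract x₁| < 1 / 8 := by
      have h1 : ((⌊Int.fract x₁ * 8⌋₊ : ℕ) : ℝ) ≤ Int.fract x₁ * 8 := Nat.floor_le (hfracpos _)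
      have h2 : Int.fract x₁ * 8 < (⌊Int.fract x₁ * 8⌋₊ : ℕ) + 1 := Nat.lt_floor_add_one _
      have h3 : ((⌊Int.fract x₁ * 8⌋₊ : ℕ) : ℝ) ≤ Int.fract x₂ * 8 := by
        rw [hfloor_eq]; exact Nat.floor_le (hfracpos _)
      have h4 : Int.fract x₂ * 8 < ((⌊Int.fract x₁ * 8⌋₊ : ℕ) : ℝ) + 1 := by
        rw [hfloor_eq]; exact Nat.lt_floor_add_one _
      rw [abs_lt]; constructor <;> nlinarith
    have hcast : (((m₂ - m₁) * (L + 1) : ℕ) : ℝ) * α i = x₂ - x₁ := by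
      rw [hx₁, hx₂]
      have : ((m₂ - m₁) * (L + 1) : ℕ) = m₂ * (L + 1) - m₁ * (L + 1) := by
        rw [Nat.sub_mul]
      rw [this, Nat.cast_sub (Nat.mul_le_mul_right _ hmlt.le)]
      ring
    set m : ℤ := ⌊x₂⌋ - ⌊x₁⌋ with hm
    have hdiff : (((m₂ - m₁) * (L + 1) : ℕ) : ℝ) * α i - m = Int.fract x₂ - Int.fract x₁ := by
      rw [hcast, hm]
      have e1 := Int.floor_add_fract x₁
      have e2 := Int.floor_add_fract x₂
      push_cast
      linarith
    have hθ : θ i = α i * (2 * Real.pi) := by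
      rw [hα]; field_simp
    have hkey : (((m₂ - m₁) * (L + 1) : ℕ) : ℝ) * θ i
        = ((((m₂ - m₁) * (L + 1) : ℕ) : ℝ) * α i - m) * (2 * Real.pi) + m * (2 * Real.pi) := by
      rw [hθ]; ring
    rw [hkey, Real.cos_add_int_mul_two_pi]
    set y : ℝ := ((((m₂ - m₁) * (L + 1) : ℕ) : ℝ) * α i - m) * (2 * Real.pi) with hy
    have hybound : |y| ≤ Real.pi / 3 := by
      rw [hy, abs_mul, abs_of_pos (by linarith : (0:ℝ) < 2 * Real.pi)]
      rw [hdiff]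
      have := hclose.le
      nlinarith [abs_nonneg (Int.fract x₂ - Int.fract x₁)]
    calc (1:ℝ) / 2 = Real.cos (Real.pi / 3) := Real.cos_pi_div_three.symm
      _ ≤ Real.cos |y| :=
        Real.cos_le_cos_of_nonneg_of_le_pi (abs_nonneg _) (by linarith) hybound
      _ = Real.cos y := Real.cos_abs y

set_option maxHeartbeats 1600000 in
/-- Generalized Li criterion for multisets, Theorem 3. -/
theorem generalized_li_criterion_multiset (σ : ℝ) (ι : Type*) [Countable ι] (ρ : ι → ℂ)
    (hne : ∀ a : ℝ, a ≠ σ → ∀ i, ρ i ≠ 2 * σ - a ∧ ρ i ≠ (a : ℂ))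
    (hsum : ∀ a : ℝ,
      (Summable fun i => (1 + |(ρ i).re|) / (1 + ‖ρ i + a - 2 * σ‖ ^ 2)) ∧
      (Summable fun i => (1 + |(ρ i).re|) / (1 + ‖ρ i - a‖ ^ 2)))
    (τ : ι ≃ ι) (hτ : ∀ i, ρ (τ i) = 2 * σ - ρ i) :
    (∀ i, (ρ i).re = σ) ↔
      ∀ a : ℝ, a ≠ σ → ∀ n : ℕ, 0 < n →
        Summable (fun i => (1 - ((ρ i - a) / (ρ i + a - 2 * σ)) ^ n).re) ∧
        0 ≤ ∑' i, (1 - ((ρ i - a) / (ρ i + a - 2 * σ)) ^ n).re := by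
  classical
  constructor
  · -- easy direction
    intro hre a ha n hn
    have hD : ∀ i, ρ i + (a : ℂ) - 2 * (σ : ℂ) ≠ 0 := by
      intro i h
      exact (hne a ha i).1 (by linear_combination h)
    set z : ι → ℂ := fun i => (ρ i - (a : ℂ)) / (ρ i + (a : ℂ) - 2 * (σ : ℂ)) with hz
    -- |z i| = 1
    have habs : ∀ i, ‖z i‖ = 1 := by
      intro i
      rw [hz]
      simp only
      rw [norm_div, div_eq_one_iff_eq (by simpa using (norm_ne_zero_iff.mpr (hD i)))]
      have hns : Complex.normSq (ρ i - (a : ℂ)) = Complex.normSq (ρ i + (a : ℂ) - 2 * (σ : ℂ)) := by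
        simp only [Complex.normSq_apply, Complex.sub_re, Complex.sub_im, Complex.add_re,
          Complex.add_im, Complex.ofReal_re, Complex.ofReal_im, Complex.mul_re, Complex.mul_im,
          Complex.re_ofNat, Complex.im_ofNat, hre i]
        ring
      rw [Complex.norm_def, Complex.norm_def, hns]
    -- the denominator is bounded below
    set c : ℝ := (a - σ) ^ 2 with hc
    have hcpos : 0 < c := by
      rw [hc]
      have : a - σ ≠ 0 := sub_ne_zero.mpr ha
      positivity
    have hDre : ∀ i, (ρ i + (a : ℂ) - 2 * (σ : ℂ)).re = a - σ := by
      intro i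
      simp [Complex.add_re, Complex.sub_re, hre i]
      ring
    have hq : ∀ i, c ≤ Complex.normSq (ρ i + (a : ℂ) - 2 * (σ : ℂ)) := by
      intro i
      rw [hc, Complex.normSq_apply, hDre i]
      nlinarith [mul_self_nonneg (ρ i + (a : ℂ) - 2 * (σ : ℂ)).im]
    -- Re (1 - z i) formula
    have hre1z : ∀ i, (1 - z i).re = 2 * c / Complex.normSq (ρ i + (a : ℂ) - 2 * (σ : ℂ)) := by
      intro i
      have h1 : (1 : ℂ) - z i = ((2 * (a - σ) : ℝ) : ℂ) / (ρ i + (a : ℂ) - 2 * (σ : ℂ)) := by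
        simp only [hz]
        rw [eq_div_iff (hD i), sub_mul, one_mul, div_mul_cancel₀ _ (hD i)]
        push_cast
        ring
      rw [h1, re_real_div, hDre i, hc]
      ring
    -- pointwise bound
    have hb : ∀ i, (1 - z i ^ n).re ≤ (n : ℝ) ^ 2 * (2 * (1 + c)) *
        ((1 + |(ρ i).re|) / (1 + ‖ρ i + a - 2 * σ‖ ^ 2)) := by
      intro i
      have h1 : (1 - z i ^ n).re ≤ (n : ℝ) ^ 2 * (1 - z i).re := by
        have := re_pow_le_of_abs_le_one (le_of_eq (habs i)) n
        exact_mod_cast this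
      have h2 : (1 - z i).re ≤ 2 * (1 + c) *
          ((1 + |(ρ i).re|) / (1 + ‖ρ i + a - 2 * σ‖ ^ 2)) := by
        rw [hre1z i, Complex.sq_norm]
        set q := Complex.normSq (ρ i + (a : ℂ) - 2 * (σ : ℂ)) with hqd
        have hq1 : c ≤ q := hq i
        have hqpos : 0 < q := lt_of_lt_of_le hcpos hq1
        have key : 2 * c / q ≤ 2 * (1 + c) / (1 + q) := by
          rw [div_le_div_iff₀ hqpos (by linarith)]
          nlinarith
        have h15 : (1:ℝ) / (1 + q) ≤ (1 + |(ρ i).re|) / (1 + q) := by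
          gcongr
          linarith [abs_nonneg (ρ i).re]
        calc 2 * c / q ≤ 2 * (1 + c) / (1 + q) := key
          _ = 2 * (1 + c) * (1 / (1 + q)) := by ring
          _ ≤ 2 * (1 + c) * ((1 + |(ρ i).re|) / (1 + q)) :=
              mul_le_mul_of_nonneg_left h15 (by positivity)
      calc (1 - z i ^ n).re ≤ (n : ℝ) ^ 2 * (1 - z i).re := h1
        _ ≤ (n : ℝ) ^ 2 * (2 * (1 + c) *
            ((1 + |(ρ i).re|) / (1 + ‖ρ i + a - 2 * σ‖ ^ 2))) := by
            apply mul_le_mul_of_nonneg_left h2 (by positivity)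
        _ = (n : ℝ) ^ 2 * (2 * (1 + c)) *
            ((1 + |(ρ i).re|) / (1 + ‖ρ i + a - 2 * σ‖ ^ 2)) := by ring
    have hnn : ∀ i, 0 ≤ (1 - z i ^ n).re := fun i =>
      re_nonneg_of_abs_le_one (le_of_eq (habs i)) n
    have hsummable : Summable (fun i => (1 - z i ^ n).re) := by
      apply Summable.of_nonneg_of_le hnn hb
      exact ((hsum a).1.mul_left _)
    exact ⟨hsummable, tsum_nonneg hnn⟩
  · intro hpos
    by_contra hcon
    push_neg at hcon
    obtain ⟨j0, hj0⟩ := hcon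
    obtain ⟨i0, hi0⟩ : ∃ i, σ < (ρ i).re := by
      rcases lt_or_gt_of_ne hj0 with h | h
      · refine ⟨τ j0, ?_⟩
        rw [hτ j0]
        have : ((2 : ℂ) * (σ : ℂ) - ρ j0).re = 2 * σ - (ρ j0).re := by
          simp [Complex.sub_re, Complex.mul_re]
        rw [this]
        linarith
      · exact ⟨j0, h⟩
    set a : ℝ := σ - 1 with ha'
    have ha : a ≠ σ := by rw [ha']; intro h; linarith [h]
    have hDne : ∀ i, ρ i + (a : ℂ) - 2 * (σ : ℂ) ≠ 0 := fun i h =>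
      (hne a ha i).1 (by linear_combination h)
    have hNne : ∀ i, ρ i - (a : ℂ) ≠ 0 := fun i h =>
      (hne a ha i).2 (by linear_combination h)
    set N : ι → ℂ := fun i => ρ i - (a : ℂ) with hNdef
    set D : ι → ℂ := fun i => ρ i + (a : ℂ) - 2 * (σ : ℂ) with hDdef
    set z : ι → ℂ := fun i => N i / D i with hzdef
    have hzne : ∀ i, z i ≠ 0 := fun i => div_ne_zero (hNne i) (hDne i)
    have hND : ∀ i, N i = D i + 2 := by
      intro i
      simp only [hNdef, hDdef, ha']
      push_cast
      ring
    have hDre : ∀ i, (D i).re = (ρ i).re - σ - 1 := by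
      intro i
      simp only [hDdef, ha', Complex.sub_re, Complex.add_re, Complex.ofReal_re, Complex.mul_re,
        Complex.re_ofNat, Complex.im_ofNat, Complex.ofReal_im]
      ring
    have hNre : ∀ i, (N i).re = (ρ i).re - σ + 1 := by
      intro i
      simp only [hNdef, ha', Complex.sub_re, Complex.ofReal_re]
      ring
    have hnormD : ∀ i, Complex.normSq (N i) - Complex.normSq (D i) = 4 * ((ρ i).re - σ) := by
      intro i
      rw [hND i]
      simp only [Complex.normSq_apply, Complex.add_re, Complex.add_im, Complex.re_ofNat,
        Complex.im_ofNat]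
      linear_combination (4 : ℝ) * hDre i
    have habsD : ∀ i, 0 < ‖D i‖ := fun i => norm_pos_iff.mpr (hDne i)
    have habsN : ∀ i, 0 < ‖N i‖ := fun i => norm_pos_iff.mpr (hNne i)
    have habsz : ∀ i, ‖z i‖ = ‖N i‖ / ‖D i‖ := by
      intro i
      simp only [hzdef]
      exact norm_div _ _
    have habsDN : ∀ i, (‖D i‖ < ‖N i‖ ↔ σ < (ρ i).re) := by
      intro i
      rw [Complex.norm_def, Complex.norm_def,
        Real.sqrt_lt_sqrt_iff (Complex.normSq_nonneg _)]
      constructor <;> intro h <;> nlinarith [hnormD i]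
    have habsND : ∀ i, (‖N i‖ ≤ ‖D i‖ ↔ (ρ i).re ≤ σ) := by
      intro i
      rw [← not_lt, habsDN i, not_lt]
    have hzgt : ∀ i, (σ < (ρ i).re ↔ 1 < ‖z i‖) := by
      intro i
      rw [habsz i, lt_div_iff₀ (habsD i), one_mul, habsDN i]
    have hzle : ∀ i, ((ρ i).re ≤ σ ↔ ‖z i‖ ≤ 1) := by
      intro i
      rw [habsz i, div_le_one (habsD i), habsND i]
    set r₀ : ℝ := ‖z i0‖ with hr₀def
    have hr₀ : 1 < r₀ := (hzgt i0).mp hi0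
    have hr₀pos : 0 < r₀ := lt_trans one_pos hr₀
    set t : ℝ := Real.sqrt ((1 + r₀) / 2) with htdef
    have ht2 : t ^ 2 = (1 + r₀) / 2 := Real.sq_sqrt (by linarith)
    have ht1 : 1 < t := by
      rw [htdef]
      rw [show (1:ℝ) < Real.sqrt ((1 + r₀) / 2) ↔ (1:ℝ)^2 < (1 + r₀)/2 from
        Real.lt_sqrt (by norm_num)]
      nlinarith
    have htpos : 0 < t := lt_trans one_pos ht1
    have ht2r : t ^ 2 < r₀ := by rw [ht2]; linarith
    have htr : t < r₀ := by nlinarith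
    -- the comparison function V
    set V : ι → ℝ := fun i =>
      if (ρ i).re ≤ σ then (1 - z i).re else t ^ 2 * (1 - (z i)⁻¹).re with hVdef
    have h1z : ∀ i, (1 : ℂ) - z i = ((-2 : ℝ) : ℂ) / D i := by
      intro i
      simp only [hzdef]
      rw [eq_div_iff (hDne i), sub_mul, one_mul, div_mul_cancel₀ _ (hDne i), hND i]
      push_cast
      ring
    have h1zre : ∀ i, (1 - z i).re = -2 * (D i).re / Complex.normSq (D i) := by
      intro i; rw [h1z i, re_real_div]
    have h1zi : ∀ i, (1 : ℂ) - (z i)⁻¹ = ((2 : ℝ) : ℂ) / N i := by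
      intro i
      simp only [hzdef]
      rw [inv_div, eq_div_iff (hNne i), sub_mul, one_mul, div_mul_cancel₀ _ (hNne i)]
      simp only [hNdef, hDdef, ha']
      push_cast
      ring
    have h1zire : ∀ i, (1 - (z i)⁻¹).re = 2 * (N i).re / Complex.normSq (N i) := by
      intro i; rw [h1zi i, re_real_div]
    have hnormSqDpos : ∀ i, 0 < Complex.normSq (D i) := fun i => Complex.normSq_pos.mpr (hDne i)
    have hnormSqNpos : ∀ i, 0 < Complex.normSq (N i) := fun i => Complex.normSq_pos.mpr (hNne i)
    have hVnn : ∀ i, 0 ≤ V i := by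
      intro i
      rw [hVdef]
      simp only
      split_ifs with h
      · rw [h1zre i]
        have h2 : (D i).re ≤ -1 := by rw [hDre i]; linarith
        exact div_nonneg (by linarith) (hnormSqDpos i).le
      · push_neg at h
        rw [h1zire i]
        have h2 : 1 ≤ (N i).re := by rw [hNre i]; linarith
        exact mul_nonneg (sq_nonneg t)
          (div_nonneg (by linarith) (hnormSqNpos i).le)
    -- V is dominated by a summable function
    set C : ℝ := 4 * (1 + |σ|) * (1 + t ^ 2) with hCdef
    have hCpos : 0 < C := by rw [hCdef]; positivity
    have hVle : ∀ i, V i ≤ C * ((1 + |(ρ i).re|) / (1 + ‖D i‖ ^ 2)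
        + (1 + |(ρ i).re|) / (1 + ‖N i‖ ^ 2)) := by
      intro i
      have hg1nn : 0 ≤ (1 + |(ρ i).re|) / (1 + ‖D i‖ ^ 2) := by positivity
      have hg2nn : 0 ≤ (1 + |(ρ i).re|) / (1 + ‖N i‖ ^ 2) := by positivity
      have hCD : 4 * (1 + |σ|) ≤ C := by
        rw [hCdef]
        nlinarith [sq_nonneg t, abs_nonneg σ]
      rw [hVdef]
      simp only
      split_ifs with h
      · -- branch Re ρ ≤ σ
        rw [h1zre i]
        have hDrei : (D i).re = (ρ i).re - σ - 1 := hDre i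
        have h2 : (D i).re ≤ -1 := by rw [hDrei]; linarith
        have hq1 : 1 ≤ Complex.normSq (D i) := by
          rw [Complex.normSq_apply]
          nlinarith [mul_self_nonneg (D i).im]
        have hnum : -2 * (D i).re ≤ 2 * (1 + |σ|) * (1 + |(ρ i).re|) := by
          rw [hDrei]
          nlinarith [le_abs_self σ, neg_abs_le (ρ i).re, abs_nonneg σ, abs_nonneg (ρ i).re,
            mul_nonneg (abs_nonneg σ) (abs_nonneg (ρ i).re)]
        have hkey : -2 * (D i).re / Complex.normSq (D i)
            ≤ 4 * (1 + |σ|) * ((1 + |(ρ i).re|) / (1 + Complex.normSq (D i))) := by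
          rw [← mul_div_assoc, div_le_div_iff₀ (hnormSqDpos i)
            (by linarith : (0:ℝ) < 1 + Complex.normSq (D i))]
          nlinarith [mul_nonneg (sub_nonneg.mpr hnum)
              (by linarith : (0:ℝ) ≤ 1 + Complex.normSq (D i)),
            mul_nonneg (mul_nonneg (by positivity : (0:ℝ) ≤ 2 * (1 + |σ|))
              (by positivity : (0:ℝ) ≤ 1 + |(ρ i).re|))
              (by linarith : (0:ℝ) ≤ Complex.normSq (D i) - 1)]
        calc -2 * (D i).re / Complex.normSq (D i)
            ≤ 4 * (1 + |σ|) * ((1 + |(ρ i).re|) / (1 + Complex.normSq (D i))) := hkey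
          _ = 4 * (1 + |σ|) * ((1 + |(ρ i).re|) / (1 + ‖D i‖ ^ 2)) := by
              rw [Complex.sq_norm]
          _ ≤ C * ((1 + |(ρ i).re|) / (1 + ‖D i‖ ^ 2)) :=
              mul_le_mul_of_nonneg_right hCD hg1nn
          _ ≤ C * ((1 + |(ρ i).re|) / (1 + ‖D i‖ ^ 2)
              + (1 + |(ρ i).re|) / (1 + ‖N i‖ ^ 2)) := by
              have := mul_nonneg hCpos.le hg2nn
              linarith
      · -- branch Re ρ > σ
        push_neg at h
        rw [h1zire i]
        have hNrei : (N i).re = (ρ i).re - σ + 1 := hNre i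
        have h2 : 1 ≤ (N i).re := by rw [hNrei]; linarith
        have hq1 : 1 ≤ Complex.normSq (N i) := by
          rw [Complex.normSq_apply]
          nlinarith [mul_self_nonneg (N i).im]
        have hnum : 2 * (N i).re ≤ 2 * (1 + |σ|) * (1 + |(ρ i).re|) := by
          rw [hNrei]
          nlinarith [neg_abs_le σ, le_abs_self (ρ i).re, abs_nonneg σ, abs_nonneg (ρ i).re,
            mul_nonneg (abs_nonneg σ) (abs_nonneg (ρ i).re)]
        have hkey : 2 * (N i).re / Complex.normSq (N i)
            ≤ 4 * (1 + |σ|) * ((1 + |(ρ i).re|) / (1 + Complex.normSq (N i))) := by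
          rw [← mul_div_assoc, div_le_div_iff₀ (hnormSqNpos i)
            (by linarith : (0:ℝ) < 1 + Complex.normSq (N i))]
          nlinarith [mul_nonneg (sub_nonneg.mpr hnum)
              (by linarith : (0:ℝ) ≤ 1 + Complex.normSq (N i)),
            mul_nonneg (mul_nonneg (by positivity : (0:ℝ) ≤ 2 * (1 + |σ|))
              (by positivity : (0:ℝ) ≤ 1 + |(ρ i).re|))
              (by linarith : (0:ℝ) ≤ Complex.normSq (N i) - 1)]
        have ht2nn : (0:ℝ) ≤ t ^ 2 := sq_nonneg t
        calc t ^ 2 * (2 * (N i).re / Complex.normSq (N i))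
            ≤ t ^ 2 * (4 * (1 + |σ|) * ((1 + |(ρ i).re|) / (1 + Complex.normSq (N i)))) :=
              mul_le_mul_of_nonneg_left hkey ht2nn
          _ = t ^ 2 * 4 * (1 + |σ|) * ((1 + |(ρ i).re|) / (1 + ‖N i‖ ^ 2)) := by
              rw [Complex.sq_norm]; ring
          _ ≤ C * ((1 + |(ρ i).re|) / (1 + ‖N i‖ ^ 2)) := by
              apply mul_le_mul_of_nonneg_right _ hg2nn
              rw [hCdef]
              nlinarith [abs_nonneg σ, sq_nonneg t]
          _ ≤ C * ((1 + |(ρ i).re|) / (1 + ‖D i‖ ^ 2)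
              + (1 + |(ρ i).re|) / (1 + ‖N i‖ ^ 2)) := by
              have := mul_nonneg hCpos.le hg1nn
              linarith
    have hdom : Summable (fun i => C * ((1 + |(ρ i).re|) / (1 + ‖D i‖ ^ 2)
        + (1 + |(ρ i).re|) / (1 + ‖N i‖ ^ 2))) := by
      apply Summable.mul_left
      exact Summable.add (hsum a).1 (hsum a).2
    have hVs : Summable V := Summable.of_nonneg_of_le hVnn hVle hdom
    set K : ℝ := ∑' i, V i with hKdef
    have hK0 : 0 ≤ K := tsum_nonneg hVnn
    -- the bad set is finite
    set P : ι → Prop := fun i => ‖z i‖ < t⁻¹ ∨ t < ‖z i‖ with hPdef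
    set M : ℝ := 2 * t / (t - 1) with hMdef
    have hMpos : 0 < M := by
      rw [hMdef]
      exact div_pos (by linarith) (by linarith)
    have hfinite : {i | P i}.Finite := by
      apply Set.Finite.subset (finite_of_summable (hsum a).1
        (ε := 1 / (2 * (1 + M ^ 2))) (by positivity))
      intro i hi
      have hDM : ‖D i‖ ≤ M := by
        have htri1 : ‖N i‖ ≤ ‖D i‖ + 2 := by
          rw [hND i]
          calc ‖D i + 2‖ ≤ ‖D i‖ + ‖(2:ℂ)‖ :=
                norm_add_le _ _
            _ = ‖D i‖ + 2 := by norm_num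
        have htri2 : ‖D i‖ ≤ ‖N i‖ + 2 := by
          have hDN : D i = N i + (-2) := by rw [hND i]; ring
          rw [hDN]
          calc ‖N i + (-2)‖ ≤ ‖N i‖ + ‖(-2:ℂ)‖ :=
                norm_add_le _ _
            _ = ‖N i‖ + 2 := by norm_num
        have hkey : ‖D i‖ * (t - 1) < 2 * t := by
          rcases hi with h | h
          · -- |z| < t⁻¹
            rw [habsz i, div_lt_iff₀ (habsD i)] at h
            -- |N| < t⁻¹ * |D|
            have h2 : t * ‖N i‖ < ‖D i‖ := by
              rw [inv_mul_eq_div] at h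
              calc t * ‖N i‖ < t * (t⁻¹ * ‖D i‖) := by
                    apply mul_lt_mul_of_pos_left _ htpos
                    rwa [inv_mul_eq_div]
                _ = ‖D i‖ := by field_simp
            nlinarith [habsN i, habsD i]
          · -- t < |z|
            rw [habsz i, lt_div_iff₀ (habsD i)] at h
            nlinarith [habsD i]
        rw [hMdef, le_div_iff₀ (by linarith : (0:ℝ) < t - 1)]
        linarith
      simp only [Set.mem_setOf_eq]
      calc 1 / (2 * (1 + M ^ 2)) ≤ 1 / (1 + ‖D i‖ ^ 2) := by
            apply one_div_le_one_div_of_le (by positivity)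
            nlinarith [habsD i, hMpos]
        _ ≤ (1 + |(ρ i).re|) / (1 + ‖D i‖ ^ 2) := by
            gcongr
            linarith [abs_nonneg (ρ i).re]
    set Bs : Finset ι := hfinite.toFinset with hBsdef
    have hi0B : i0 ∈ Bs := by
      rw [hBsdef, Set.Finite.mem_toFinset]
      exact Or.inr htr
    -- pointwise bound off the bad set
    have hoff : ∀ i, ¬ P i → ∀ m : ℕ, (1 - z i ^ m).re ≤ (m : ℝ) ^ 2 * t ^ (2 * m) * V i := by
      intro i hPi m
      have hPi' : ¬ (‖z i‖ < t⁻¹ ∨ t < ‖z i‖) := hPi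
      push_neg at hPi'
      obtain ⟨hlow, hhigh⟩ := hPi'
      have htn : (1 : ℝ) ≤ t ^ (2 * m) := one_le_pow₀ ht1.le
      by_cases hx : (ρ i).re ≤ σ
      · have hz1 : ‖z i‖ ≤ 1 := (hzle i).mp hx
        have h1 := re_pow_le_of_abs_le_one hz1 m
        have hV1 : V i = (1 - z i).re := by rw [hVdef]; simp only [if_pos hx]
        have hVnni : 0 ≤ (1 - z i).re := by rw [← hV1]; exact hVnn i
        calc (1 - z i ^ m).re ≤ (m : ℝ) ^ 2 * (1 - z i).re := h1
          _ ≤ (m : ℝ) ^ 2 * t ^ (2 * m) * (1 - z i).re := by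
              have hmm : (m:ℝ)^2 ≤ (m:ℝ)^2 * t^(2*m) := by
                nlinarith [sq_nonneg (m:ℝ)]
              exact mul_le_mul_of_nonneg_right hmm hVnni
          _ = (m : ℝ) ^ 2 * t ^ (2 * m) * V i := by rw [hV1]
      · push_neg at hx
        have hz1 : 1 < ‖z i‖ := (hzgt i).mp hx
        have h1 := re_pow_le_of_abs_le_t ht1.le hz1.le hhigh m
        have hinv : ‖(z i)⁻¹‖ ≤ 1 := by
          rw [norm_inv]
          exact inv_le_one_of_one_le₀ hz1.le
        have hfact : (1 : ℂ) - z i = -(z i) * (1 - (z i)⁻¹) := by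
          have hzz : z i * (z i)⁻¹ = 1 := mul_inv_cancel₀ (hzne i)
          calc (1 : ℂ) - z i = z i * (z i)⁻¹ - z i := by rw [hzz]
            _ = -(z i) * (1 - (z i)⁻¹) := by ring
        have habs1 : ‖1 - z i‖ ≤ t * ‖1 - (z i)⁻¹‖ := by
          rw [hfact, norm_mul, norm_neg]
          exact mul_le_mul_of_nonneg_right hhigh (norm_nonneg _)
        have hsq : ‖1 - (z i)⁻¹‖ ^ 2 ≤ 2 * (1 - (z i)⁻¹).re := by
          have hid := re_identity ((z i)⁻¹)
          nlinarith [hinv, norm_nonneg ((z i)⁻¹)]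
        have hV2 : V i = t ^ 2 * (1 - (z i)⁻¹).re := by
          rw [hVdef]; simp only [if_neg (not_le.mpr hx)]
        have hchain : ‖1 - z i‖ ^ 2 / 2 ≤ t ^ 2 * (1 - (z i)⁻¹).re := by
          have hs1 : ‖1 - z i‖ ^ 2 ≤ t ^ 2 * ‖1 - (z i)⁻¹‖ ^ 2 := by
            have := pow_le_pow_left₀ (norm_nonneg _) habs1 2
            calc ‖1 - z i‖ ^ 2 ≤ (t * ‖1 - (z i)⁻¹‖) ^ 2 := this
              _ = t ^ 2 * ‖1 - (z i)⁻¹‖ ^ 2 := by ring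
          nlinarith [sq_nonneg t]
        calc (1 - z i ^ m).re ≤ (m : ℝ) ^ 2 * t ^ (2 * m) * (‖1 - z i‖ ^ 2 / 2) := h1
          _ ≤ (m : ℝ) ^ 2 * t ^ (2 * m) * (t ^ 2 * (1 - (z i)⁻¹).re) := by
              apply mul_le_mul_of_nonneg_left hchain (by positivity)
          _ = (m : ℝ) ^ 2 * t ^ (2 * m) * V i := by rw [hV2]
    -- asymptotics: choose the threshold L
    have hinvlt : r₀⁻¹ < 1 := inv_lt_one_of_one_lt₀ hr₀
    have hgeom1 : Filter.Tendsto (fun m : ℕ => ((Bs.card : ℝ) + 1) * (r₀⁻¹) ^ m)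
        Filter.atTop (nhds 0) := by
      have h := tendsto_pow_atTop_nhds_zero_of_lt_one (by positivity : (0:ℝ) ≤ r₀⁻¹) hinvlt
      simpa using h.const_mul ((Bs.card : ℝ) + 1)
    have hgeom2 : Filter.Tendsto (fun m : ℕ => K * ((m : ℝ) ^ 2 * (t ^ 2 / r₀) ^ m))
        Filter.atTop (nhds 0) := by
      have h0 : ‖t ^ 2 / r₀‖ < 1 := by
        rw [Real.norm_eq_abs, abs_of_pos (by positivity), div_lt_one hr₀pos]
        exact ht2r
      have h := (summable_pow_mul_geometric_of_norm_lt_one 2 h0).tendsto_atTop_zero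
      simpa using h.const_mul K
    have hsum0 : Filter.Tendsto (fun m : ℕ => ((Bs.card : ℝ) + 1) * (r₀⁻¹) ^ m
        + K * ((m : ℝ) ^ 2 * (t ^ 2 / r₀) ^ m)) Filter.atTop (nhds 0) := by
      simpa using hgeom1.add hgeom2
    have hev : ∀ᶠ m : ℕ in Filter.atTop, ((Bs.card : ℝ) + 1) * (r₀⁻¹) ^ m
        + K * ((m : ℝ) ^ 2 * (t ^ 2 / r₀) ^ m) < 1 / 2 :=
      hsum0.eventually_lt_const (by norm_num)
    obtain ⟨L, hL⟩ := Filter.eventually_atTop.mp hev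
    -- choose n via simultaneous approximation
    obtain ⟨n, hnL, hn0, hcos⟩ := simul_approx Bs (fun i => Complex.arg (z i)) L
    have hnum : ((Bs.card : ℝ) + 1) + (n : ℝ) ^ 2 * t ^ (2 * n) * K < r₀ ^ n / 2 := by
      have h2 := hL n hnL
      have hr₀n : (0 : ℝ) < r₀ ^ n := by positivity
      have e1 : (r₀⁻¹) ^ n * r₀ ^ n = 1 := by
        rw [← mul_pow, inv_mul_cancel₀ (ne_of_gt hr₀pos), one_pow]
      have e2 : (t ^ 2 / r₀) ^ n * r₀ ^ n = t ^ (2 * n) := by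
        rw [← mul_pow, div_mul_cancel₀ _ (ne_of_gt hr₀pos), ← pow_mul]
      have h3 := mul_lt_mul_of_pos_right h2 hr₀n
      have h4 : (((Bs.card : ℝ) + 1) * (r₀⁻¹) ^ n + K * ((n : ℝ) ^ 2 * (t ^ 2 / r₀) ^ n)) * r₀ ^ n
          = ((Bs.card : ℝ) + 1) * ((r₀⁻¹) ^ n * r₀ ^ n)
            + K * (n : ℝ) ^ 2 * ((t ^ 2 / r₀) ^ n * r₀ ^ n) := by ring
      rw [h4, e1, e2] at h3
      nlinarith [h3]
    -- apply the positivity hypothesis at (a, n)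
    obtain ⟨hSf, hTf⟩ := hpos a ha n hn0
    have hSf' : Summable (fun i => (1 - z i ^ n).re) := hSf
    have hTf' : (0 : ℝ) ≤ ∑' i, (1 - z i ^ n).re := hTf
    set S : Set ι := ↑Bs with hSdef
    have hsplit := Summable.tsum_add_tsum_compl (f := fun i => (1 - z i ^ n).re) (s := S)
      (hSf'.subtype _) (hSf'.subtype _)
    -- bound the sum over the bad set
    have hfB : ∀ i ∈ Bs, (1 - z i ^ n).re ≤ 1 := by
      intro i hi
      have hcosi := hcos i hi
      have hrepow := re_pow_eq (z i) n
      have hposre : 0 ≤ (z i ^ n).re := by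
        rw [hrepow]
        exact mul_nonneg (pow_nonneg (norm_nonneg _) n) (by linarith)
      have : (1 - z i ^ n).re = 1 - (z i ^ n).re := by simp [Complex.sub_re]
      rw [this]
      linarith
    have hfB0 : (1 - z i0 ^ n).re ≤ 1 - r₀ ^ n * (1 / 2) := by
      have hrepow := re_pow_eq (z i0) n
      have hcos0 := hcos i0 hi0B
      have hge : r₀ ^ n * (1 / 2) ≤ (z i0 ^ n).re := by
        rw [hrepow, ← hr₀def]
        exact mul_le_mul_of_nonneg_left hcos0 (pow_nonneg hr₀pos.le n)
      have : (1 - z i0 ^ n).re = 1 - (z i0 ^ n).re := by simp [Complex.sub_re]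
      rw [this]
      linarith
    have hsumB : ∑ i ∈ Bs, (1 - z i ^ n).re ≤ (Bs.card : ℝ) + (1 - r₀ ^ n * (1 / 2)) := by
      rw [← Finset.sum_erase_add Bs _ hi0B]
      have h1 : ∑ i ∈ Bs.erase i0, (1 - z i ^ n).re ≤ (Bs.erase i0).card • (1 : ℝ) :=
        Finset.sum_le_card_nsmul _ _ _ (fun i hi => hfB i (Finset.mem_of_mem_erase hi))
      have h2 : ((Bs.erase i0).card • (1 : ℝ)) ≤ (Bs.card : ℝ) := by
        rw [nsmul_eq_mul, mul_one]
        exact_mod_cast Finset.card_le_card (Finset.erase_subset _ _)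
      linarith
    have hStsum : ∑' (x : S), (1 - z x.1 ^ n).re = ∑ i ∈ Bs, (1 - z i ^ n).re :=
      Finset.tsum_subtype' Bs (fun i => (1 - z i ^ n).re)
    -- bound the sum over the complement
    have hBc : ∑' (x : ↥Sᶜ), (1 - z x.1 ^ n).re ≤ (n : ℝ) ^ 2 * t ^ (2 * n) * K := by
      have hb1 : ∀ x : ↥Sᶜ, (1 - z x.1 ^ n).re ≤ (n : ℝ) ^ 2 * t ^ (2 * n) * V x.1 := by
        intro x
        apply hoff
        have hx2 := x.2
        simp only [hSdef, Set.mem_compl_iff, Finset.coe_sort_coe, Set.mem_setOf_eq,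
          Finset.mem_coe, hBsdef, Set.Finite.mem_toFinset] at hx2
        exact hx2
      calc ∑' (x : ↥Sᶜ), (1 - z x.1 ^ n).re
          ≤ ∑' (x : ↥Sᶜ), (n : ℝ) ^ 2 * t ^ (2 * n) * V x.1 :=
            Summable.tsum_le_tsum hb1 (hSf'.subtype _) ((hVs.mul_left _).subtype _)
        _ = (n : ℝ) ^ 2 * t ^ (2 * n) * ∑' (x : ↥Sᶜ), V x.1 := tsum_mul_left
        _ ≤ (n : ℝ) ^ 2 * t ^ (2 * n) * K := by
            apply mul_le_mul_of_nonneg_left _ (by positivity)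
            exact Summable.tsum_subtype_le V _ hVnn hVs
    rw [← hsplit, hStsum] at hTf'
    linarith
end

section
/- Let a and σ be real numbers with a < σ, and let ι be a countable index type with ρ : ι → ℂ such that ρ(i) ≠ 2σ − a for all i, the family i ↦ (1 + |Re ρ(i)|)/(1 + |ρ(i) + a − 2σ|²) is summable, and some index i₀ satisfies Re ρ(i₀) > σ. Then the supremum t of |(ρ(i) − a)/(ρ(i) + a − 2σ)| − 1 over all i is attained, is positive, and is attained at only finitely many indices. -/
open Complex

set_option maxHeartbeats 800000 in
/-- if `a < σ`, the summability condition holds, and some `ρ(i₀)` has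
`Re ρ(i₀) > σ`, then the supremum `t` of `|(ρ(i) − a)/(ρ(i) + a − 2σ)| − 1` over all `i`
is attained, is positive, and is attained at only finitely many indices. -/
theorem sup_abs_quotient_attained (a σ : ℝ) (h : a < σ) (ι : Type*) [Countable ι]
    (ρ : ι → ℂ) (hne : ∀ i, ρ i ≠ 2 * σ - a)
    (hsum : Summable fun i => (1 + |(ρ i).re|) / (1 + ‖ρ i + a - 2 * σ‖ ^ 2))
    (i₀ : ι) (hi₀ : σ < (ρ i₀).re) :
    ∃ t : ℝ,
      IsGreatest (Set.range fun i => ‖(ρ i - a) / (ρ i + a - 2 * σ)‖ - 1) t ∧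
      0 < t ∧
      {i : ι | ‖(ρ i - a) / (ρ i + a - 2 * σ)‖ - 1 = t}.Finite := by
  set f : ι → ℝ := fun i => ‖(ρ i - a) / (ρ i + a - 2 * σ)‖ - 1 with hfdef
  have hw : ∀ i, ρ i + a - 2 * σ ≠ 0 := by
    intro i hi
    exact hne i (by linear_combination hi)
  have hwpos : ∀ i, 0 < ‖ρ i + a - 2 * σ‖ := fun i =>
    norm_pos_iff.mpr (hw i)
  have key : ∀ i, (‖ρ i - a‖)^2 =
      (‖ρ i + a - 2*σ‖)^2 + 4*(σ-a)*((ρ i).re - σ) := by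
    intro i
    rw [Complex.sq_norm, Complex.sq_norm, Complex.normSq_apply, Complex.normSq_apply]
    simp [Complex.sub_re, Complex.add_re, Complex.sub_im, Complex.add_im,
      Complex.mul_re, Complex.mul_im]
    ring
  have hfi : ∀ i, f i = ‖ρ i - a‖ / ‖ρ i + a - 2 * σ‖ - 1 := by
    intro i; simp [hfdef, norm_div]
  -- positivity at i₀
  have hfi₀ : 0 < f i₀ := by
    rw [hfi i₀]
    have hk := key i₀
    have hB := hwpos i₀
    have hA : 0 ≤ ‖ρ i₀ - a‖ := norm_nonneg _
    have hlt : ‖ρ i₀ + a - 2*σ‖ < ‖ρ i₀ - a‖ := by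
      nlinarith [sq_nonneg (‖ρ i₀ - a‖ + ‖ρ i₀ + a - 2*σ‖),
        sq_nonneg (‖ρ i₀ - a‖ - ‖ρ i₀ + a - 2*σ‖)]
    have := (one_lt_div hB).mpr hlt
    linarith
  -- finiteness of superlevel sets
  have hfin : ∀ c : ℝ, 0 < c → {i | c ≤ f i}.Finite := by
    intro c hc
    have hσa : 0 < σ - a := by linarith
    set ε' : ℝ := c*(c+2)/(4*(σ-a)) with hε'def
    have hε' : 0 < ε' := by positivity
    set R : ℝ := (2*|σ|+2)/ε' with hRdef
    have hR : 0 < R := by positivity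
    have hεR : ε' * R = 2*|σ|+2 := by
      rw [hRdef, mul_div_assoc']; exact mul_div_cancel_left₀ _ hε'.ne'
    set δ : ℝ := min (min (ε'/2) 1) (1/(1+R)) with hδdef
    have hδ : 0 < δ := by
      apply lt_min (lt_min (by positivity) one_pos) (by positivity)
    have hsub : {i | c ≤ f i} ⊆
        {i | δ ≤ (1 + |(ρ i).re|) / (1 + ‖ρ i + a - 2 * σ‖ ^ 2)} := by
      intro i hi
      simp only [Set.mem_setOf_eq] at hi ⊢
      set A := ‖ρ i - a‖ with hA
      set B := ‖ρ i + a - 2*σ‖ with hB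
      have hBpos : 0 < B := hwpos i
      have hAnn : 0 ≤ A := norm_nonneg _
      rw [hfi i] at hi
      have hAB : (1+c) * B ≤ A := by
        rw [div_sub_one (ne_of_gt hBpos), le_div_iff₀ hBpos] at hi
        linarith
      have hsq : (1+c)^2 * B^2 ≤ A^2 := by
        have := mul_le_mul hAB hAB (by positivity) hAnn
        nlinarith
      have hk := key i
      set x := (ρ i).re with hx
      set s := B^2 with hs
      have hspos : 0 < s := by positivity
      have hxs : σ + ε' * s ≤ x := by
        have h4 : ε' * (4*(σ-a)) = c*(c+2) := by rw [hε'def]; exact div_mul_cancel₀ _ (mul_pos four_pos hσa).ne'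
        nlinarith
      rw [le_div_iff₀ (by positivity : (0:ℝ) < 1 + s)]
      have hδ1 : δ ≤ ε'/2 := le_trans (min_le_left _ _) (min_le_left _ _)
      have hδ2 : δ ≤ 1 := le_trans (min_le_left _ _) (min_le_right _ _)
      have hδ3 : δ ≤ 1/(1+R) := min_le_right _ _
      rcases le_total s R with hsR | hsR
      · have : δ * (1+s) ≤ 1 := by
          calc δ * (1+s) ≤ (1/(1+R)) * (1+R) := by
                apply mul_le_mul hδ3 (by linarith) (by linarith) (by positivity)
            _ = 1 := by field_simp
        nlinarith [abs_nonneg x]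
      · have hεs : 2*|σ|+2 ≤ ε' * s := by
          calc 2*|σ|+2 = ε' * R := hεR.symm
            _ ≤ ε' * s := by nlinarith
        have hxpos : 0 < x := by
          have := abs_nonneg σ
          nlinarith [neg_abs_le σ]
        have hxabs : |x| = x := abs_of_pos hxpos
        rw [hxabs]
        have h1 : δ * s ≤ (ε'/2) * s := mul_le_mul_of_nonneg_right hδ1 hspos.le
        nlinarith [neg_abs_le σ]
    apply Set.Finite.subset _ hsub
    have htend := hsum.tendsto_cofinite_zero
    have hev : ∀ᶠ i in Filter.cofinite,
        (1 + |(ρ i).re|) / (1 + ‖ρ i + a - 2 * σ‖ ^ 2) < δ :=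
      htend.eventually_lt_const hδ
    have := Filter.eventually_cofinite.mp hev
    apply this.subset
    intro i hi
    simp only [Set.mem_setOf_eq] at hi ⊢
    linarith
  -- the set of indices beating i₀
  have hS : {i | f i₀ ≤ f i}.Finite := hfin (f i₀) hfi₀
  have hSne : {i | f i₀ ≤ f i}.Nonempty := ⟨i₀, by simp only [Set.mem_setOf_eq]; exact le_refl _⟩
  obtain ⟨j, hjS, hjmax⟩ := Set.exists_max_image _ f hS hSne
  refine ⟨f j, ⟨⟨j, rfl⟩, ?_⟩, ?_, ?_⟩
  · rintro x ⟨i, rfl⟩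
    rcases le_or_gt (f i₀) (f i) with hi | hi
    · exact hjmax i hi
    · exact le_trans (le_of_lt hi) hjS
  · exact lt_of_lt_of_le hfi₀ hjS
  · apply hS.subset
    intro i hi
    simp only [Set.mem_setOf_eq] at hi ⊢
    have : f i = f j := hi
    rw [this]
    exact hjS
end
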